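/- Let r ≥ 1 and k be integers such that k⁵ + k⁴ + 1 ≡ 0 (mod r), gcd(k, r) = 1, and let b ∈ ℤ/rℤ satisfy k²·b + k·b + b ≡ 0 (mod r). Then the operation x ∘ y = -k³·x + k·y + b on ℤ/rℤ satisfies the identity x ∘ (y ∘ (y ∘ x)) = y for all x, y ∈ ℤ/rℤ, and for each fixed a, both x ↦ x ∘ a and y ↦ a ∘ y are bijections of ℤ/rℤ. -/

import Mathlib

theorem t2_quasigroup_from_residue_ring (r : ℕ) (hr : 1 ≤ r) (k : ℤ)
    (hf : (r : ℤ) ∣ k ^ 5 + k ^ 4 + 1) (hgcd : Int.gcd k r = 1)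
    (b : ZMod r) (hb : (k : ZMod r) ^ 2 * b + (k : ZMod r) * b + b = 0)
    (op : ZMod r → ZMod r → ZMod r)
    (hop : ∀ x y, op x y = -(k : ZMod r) ^ 3 * x + (k : ZMod r) * y + b) :
    (∀ x y, op x (op y (op y x)) = y) ∧
    (∀ a, Function.Bijective (fun x => op x a)) ∧
    (∀ a, Function.Bijective (fun y => op a y)) := by
  haveI : NeZero r := ⟨by omega⟩
  set K : ZMod r := (k : ZMod r) with hK
  have hf' : K ^ 5 + K ^ 4 + 1 = 0 := by
    have := (ZMod.intCast_zmod_eq_zero_iff_dvd (k ^ 5 + k ^ 4 + 1) r).2 hf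
    push_cast at this
    exact this
  have hU : IsUnit K := by
    have hcop : IsCoprime k (r : ℤ) := Int.isCoprime_iff_gcd_eq_one.2 hgcd
    obtain ⟨u, v, huv⟩ := hcop
    refine IsUnit.of_mul_eq_one (a := K) (u : ZMod r) ?_
    have := congrArg (Int.cast : ℤ → ZMod r) huv
    push_cast at this
    simp [ZMod.natCast_self] at this
    linear_combination this
  refine ⟨?_, ?_, ?_⟩
  · intro x y
    rw [hop, hop, hop]
    linear_combination (-y) * hf' + hb
  · intro a
    have hU3 : IsUnit (-K ^ 3) := (hU.pow 3).neg
    have hinj : Function.Injective (fun x => op x a) := by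
      intro x1 x2 h
      simp only [hop] at h
      exact hU3.mul_left_cancel (by linear_combination h)
    exact (Finite.injective_iff_bijective).1 hinj
  · intro a
    have hinj : Function.Injective (fun y => op a y) := by
      intro y1 y2 h
      simp only [hop] at h
      exact hU.mul_left_cancel (by linear_combination h)
    exact (Finite.injective_iff_bijective).1 hinj
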